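/- Let q be an acyclic natural join query with a join tree T rooted at a relation r, and let I be an instance. Perform a forward pass: process the vertices of T in an order in which every child precedes its parent, and when processing a vertex R, replace the current content of R by R ⋉ S successively for each child S of R in T. Then perform a backward pass: process the vertices in an order in which every parent precedes its children, and for each non-root vertex R with parent P in T, replace the current content of R by R ⋉ P. Then the resulting instance I* is a full reduction of I: for every relation R of q, I*(R) = π_{attr(R)}(q(I)); in particular, q(I*) = q(I) and I* is fully reduced. -/

import Mathlib

namespace JoinQuery

universe u

variable {ι : Type} {α : Type}

/-- A *tuple* over a finite set `X` of attributes, with values in the domain `D`: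
a function assigning a domain value to each attribute of `X`. -/
def Tuple (D : Type u) {α : Type} (X : Finset α) : Type u := {a // a ∈ X} → D

/-- Projection: the restriction of a tuple over `X` to a subset `Y ⊆ X` of the attributes. -/
def restrict {D : Type u} {X Y : Finset α} (h : Y ⊆ X) (t : Tuple D X) : Tuple D Y :=
  fun a => t ⟨a.1, h a.2⟩

/-- A database instance for the natural join query whose relation symbols are the elements
of `ι` with attribute sets given by `attr`: a finite set of tuples for every relation. -/
structure Inst (attr : ι → Finset α) (D : Type u) where
  rel : ∀ R : ι, Set (Tuple D (attr R))
  finite : ∀ R : ι, (rel R).Finite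

/-- The set of attributes of the (sub)query given by the set `S` of relations. -/
def attrsOf [DecidableEq α] (attr : ι → Finset α) (S : Finset ι) : Finset α :=
  S.biUnion attr

theorem attr_subset_attrsOf [DecidableEq α] (attr : ι → Finset α) {S : Finset ι} {R : ι}
    (hR : R ∈ S) : attr R ⊆ attrsOf attr S :=
  Finset.subset_biUnion_of_mem attr hR

theorem attrsOf_mono [DecidableEq α] (attr : ι → Finset α) {S₁ S₂ : Finset ι} (h : S₁ ⊆ S₂) :
    attrsOf attr S₁ ⊆ attrsOf attr S₂ :=
  Finset.biUnion_subset_biUnion_of_subset_left attr h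

/-- The output of the natural join of the relations in `S`, on the instance `I`:
all tuples over the attributes of `S` whose restriction to each relation `R ∈ S`
belongs to `I.rel R`. -/
def output [DecidableEq α] {D : Type u} (attr : ι → Finset α) (I : Inst attr D)
    (S : Finset ι) : Set (Tuple D (attrsOf attr S)) :=
  {t | ∀ (R : ι) (hR : R ∈ S), restrict (attr_subset_attrsOf attr hR) t ∈ I.rel R}

/-- The output `q(I)` of the full query (the natural join of all relations). -/
def fullOutput [Fintype ι] [DecidableEq α] {D : Type u} (attr : ι → Finset α)
    (I : Inst attr D) : Set (Tuple D (attrsOf attr Finset.univ)) :=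
  output attr I Finset.univ

/-- An instance is *fully reduced* if every relation equals the projection of the
full output onto its attributes. -/
def FullyReduced [Fintype ι] [DecidableEq α] {D : Type u} (attr : ι → Finset α)
    (I : Inst attr D) : Prop :=
  ∀ R : ι,
    I.rel R = restrict (attr_subset_attrsOf attr (Finset.mem_univ R)) '' fullOutput attr I

/-- The subjoin given by the set `S` of relations is *safe*: on every fully reduced
instance, its output is the projection of the full output onto its attributes. -/
def Safe [Fintype ι] [DecidableEq α] (attr : ι → Finset α) (S : Finset ι) : Prop :=
  ∀ (D : Type u) (I : Inst attr D), FullyReduced attr I →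
    output attr I S =
      restrict (attrsOf_mono attr (Finset.subset_univ S)) '' fullOutput attr I

/-- The *join graph* of the query: vertices are the relations, two distinct relations
being adjacent iff they share an attribute. -/
def joinGraph [DecidableEq α] (attr : ι → Finset α) : SimpleGraph ι where
  Adj R S := R ≠ S ∧ (attr R ∩ attr S).Nonempty
  symm := by
    refine ⟨?_⟩
    intro R S h
    exact ⟨h.1.symm, by rw [Finset.inter_comm]; exact h.2⟩
  loopless := by refine ⟨?_⟩; intro R h; exact h.1 rfl

/-- `T` is a spanning tree of the graph `G` (a tree on the same vertex set all of whose
edges are edges of `G`). -/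
def IsSpanningTree (G T : SimpleGraph ι) : Prop :=
  T ≤ G ∧ T.IsTree

/-- `T` is a *join tree* of the query: a spanning tree of the join graph such that, for
every attribute `A` (occurring in the query), the relations containing `A` induce a
connected subgraph of `T`. -/
def IsJoinTree [DecidableEq α] (attr : ι → Finset α) (T : SimpleGraph ι) : Prop :=
  IsSpanningTree (joinGraph attr) T ∧
    ∀ A : α, (∃ R : ι, A ∈ attr R) → (T.induce {R : ι | A ∈ attr R}).Connected

/-- The query is (α-)acyclic iff it has a join tree. -/
def Acyclic [DecidableEq α] (attr : ι → Finset α) : Prop :=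
  ∃ T : SimpleGraph ι, IsJoinTree attr T

/-- The weight of an edge `{R, S}`: the number of shared attributes `|attr R ∩ attr S|`. -/
def edgeWeight [DecidableEq α] (attr : ι → Finset α) : Sym2 ι → ℕ :=
  Sym2.lift ⟨fun R S => (attr R ∩ attr S).card, fun R S => by simp [Finset.inter_comm]⟩

/-- The total weight of (the edges of) a graph `T`. -/
noncomputable def weight [DecidableEq α] (attr : ι → Finset α) (T : SimpleGraph ι) : ℕ :=
  ∑ᶠ e ∈ T.edgeSet, edgeWeight attr e

/-- `T` is a maximum spanning tree of the weighted join graph. -/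
def IsMaxSpanningTree [DecidableEq α] (attr : ι → Finset α) (T : SimpleGraph ι) : Prop :=
  IsSpanningTree (joinGraph attr) T ∧
    ∀ T' : SimpleGraph ι, IsSpanningTree (joinGraph attr) T' →
      weight attr T' ≤ weight attr T

/-- γ-acyclicity: α-acyclicity together with the absence of a γ-cycle of size 3,
i.e. of three distinct relations `R, S, T` and three distinct attributes `x, y, z`
with `x, y ∈ attr R`, `y, z ∈ attr S` and `x, y, z ∈ attr T`. -/
def GammaAcyclic [DecidableEq α] (attr : ι → Finset α) : Prop :=
  Acyclic attr ∧
    ¬ ∃ (R S T : ι) (x y z : α),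
        R ≠ S ∧ R ≠ T ∧ S ≠ T ∧ x ≠ y ∧ x ≠ z ∧ y ≠ z ∧
        x ∈ attr R ∧ y ∈ attr R ∧ y ∈ attr S ∧ z ∈ attr S ∧
        x ∈ attr T ∧ y ∈ attr T ∧ z ∈ attr T

/-- A *connected subjoin*: a nonempty set of relations inducing a connected subgraph
of the join graph. -/
def ConnectedSubjoin [DecidableEq α] (attr : ι → Finset α) (S : Finset ι) : Prop :=
  S.Nonempty ∧ ((joinGraph attr).induce (S : Set ι)).Connected

/-- The number of edges of `T` whose both endpoints contain the attribute `A`. -/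
noncomputable def eCount (attr : ι → Finset α) (T : SimpleGraph ι) (A : α) : ℕ :=
  {e ∈ T.edgeSet | ∀ R ∈ e, A ∈ attr R}.ncard

/-- The number of relations whose attribute set contains `A`. -/
noncomputable def nCount (attr : ι → Finset α) (A : α) : ℕ :=
  {R : ι | A ∈ attr R}.ncard

/-- A (binary) join expression over the relation symbols `ι`. -/
inductive JoinExpr (ι : Type) : Type where
  | leaf : ι → JoinExpr ι
  | node : JoinExpr ι → JoinExpr ι → JoinExpr ι

namespace JoinExpr

/-- The list of leaves of a join expression. -/
def leaves {ι : Type} : JoinExpr ι → List ι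
  | leaf R => [R]
  | node l r => l.leaves ++ r.leaves

/-- The set of relations appearing in a join expression. -/
def rels {ι : Type} [DecidableEq ι] : JoinExpr ι → Finset ι
  | leaf R => {R}
  | node l r => l.rels ∪ r.rels

/-- The leaves of the expression are exactly the relations of the query,
each occurring once. -/
def Complete {ι : Type} (θ : JoinExpr ι) : Prop :=
  θ.leaves.Nodup ∧ ∀ R : ι, R ∈ θ.leaves

/-- The expression has no Cartesian products: at every internal node, the relations of the
two subtrees are joined by at least one edge of `G`. -/
def ConnectedExpr {ι : Type} [DecidableEq ι] (G : SimpleGraph ι) : JoinExpr ι → Prop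
  | leaf _ => True
  | node l r =>
      (∃ R ∈ l.rels, ∃ S ∈ r.rels, G.Adj R S) ∧ ConnectedExpr G l ∧ ConnectedExpr G r

/-- The expression is *monotone* on the instance `I`: at every internal node
`θ' = θ'₁ ⋈ θ'₂`, the output of each child equals the projection of the output of the
node onto the child's attributes (no tuple of either input is removed by the join). -/
def MonotoneOn {ι α : Type} [DecidableEq ι] [DecidableEq α] {D : Type u}
    (attr : ι → Finset α) (I : Inst attr D) : JoinExpr ι → Prop
  | leaf _ => True
  | node l r =>
      output attr I l.rels =
        restrict (attrsOf_mono attr Finset.subset_union_left) ''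
          output attr I (l.rels ∪ r.rels) ∧
      output attr I r.rels =
        restrict (attrsOf_mono attr Finset.subset_union_right) ''
          output attr I (l.rels ∪ r.rels) ∧
      MonotoneOn attr I l ∧ MonotoneOn attr I r

end JoinExpr

/-- Two tuples (over possibly different attribute sets) *agree* on their common attributes. -/
def AgreeOn {α : Type} {D : Type u} {X Y : Finset α} (t : Tuple D X) (s : Tuple D Y) : Prop :=
  ∀ (a : α) (ha : a ∈ X) (hb : a ∈ Y), t ⟨a, ha⟩ = s ⟨a, hb⟩

/-- The semi-join `R ⋉ S` on the instance `I`: the tuples of `I.rel R` having a match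
in `I.rel S` (a tuple agreeing with them on `attr R ∩ attr S`). -/
def semiJoin {D : Type u} (attr : ι → Finset α) (I : Inst attr D) (R S : ι) :
    Set (Tuple D (attr R)) :=
  {t ∈ I.rel R | ∃ s ∈ I.rel S, AgreeOn t s}

/-- The instance obtained from `I` by replacing the content of relation `R` with the
semi-join `R ⋉ S` (all other relations unchanged). -/
def Inst.semiJoinUpdate [DecidableEq ι] {attr : ι → Finset α} {D : Type u}
    (I : Inst attr D) (R S : ι) : Inst attr D where
  rel := Function.update I.rel R (semiJoin attr I R S)
  finite := by
    intro R'
    rcases eq_or_ne R' R with rfl | h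
    · rw [Function.update_self]
      exact (I.finite R').subset fun t ht => ht.1
    · rw [Function.update_of_ne h]
      exact I.finite R'

/-- The forward pass of the semi-join phase: process the vertices in the order given by
the list `L`; when processing a vertex `R`, successively replace its content by `R ⋉ S`
for each of its children `S` (listed by `childList R`). -/
def forwardPass [DecidableEq ι] {attr : ι → Finset α} {D : Type u}
    (I : Inst attr D) (L : List ι) (childList : ι → List ι) : Inst attr D :=
  L.foldl (fun J R => (childList R).foldl (fun K S => K.semiJoinUpdate R S) J) I

/-- The backward pass of the semi-join phase: process the vertices in the order given by
the list `L`; when processing a non-root vertex `R`, replace its content by `R ⋉ par R`. -/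
def backwardPass [DecidableEq ι] {attr : ι → Finset α} {D : Type u}
    (I : Inst attr D) (L : List ι) (r : ι) (par : ι → ι) : Inst attr D :=
  L.foldl (fun J R => if R = r then J else J.semiJoinUpdate R (par R)) I

end JoinQuery
set_option linter.unusedSectionVars false
set_option linter.unusedVariables false

namespace JoinQuery

universe w

section Aux

variable {ι α : Type} [DecidableEq ι] [DecidableEq α] {D : Type w}

theorem agreeOn_symm {X Y : Finset α} {t : Tuple D X} {s : Tuple D Y}
    (h : AgreeOn t s) : AgreeOn s t := fun a ha hb => (h a hb ha).symm

theorem agreeOn_restrict {X Y Z : Finset α} (h1 : Y ⊆ X) (h2 : Z ⊆ X) (t : Tuple D X) :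
    AgreeOn (restrict h1 t) (restrict h2 t) := fun _ _ _ => rfl

variable {attr : ι → Finset α}

theorem semiJoinUpdate_rel_self (I : Inst attr D) (R S : ι) :
    (I.semiJoinUpdate R S).rel R = semiJoin attr I R S :=
  Function.update_self _ _ _

theorem semiJoinUpdate_rel_other (I : Inst attr D) (R S w : ι) (h : w ≠ R) :
    (I.semiJoinUpdate R S).rel w = I.rel w :=
  Function.update_of_ne h _ _

theorem semiJoinUpdate_rel_subset (I : Inst attr D) (R S w : ι) :
    (I.semiJoinUpdate R S).rel w ⊆ I.rel w := by
  rcases eq_or_ne w R with rfl | h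
  · rw [semiJoinUpdate_rel_self]; exact fun t ht => ht.1
  · rw [semiJoinUpdate_rel_other _ _ _ _ h]

theorem fullOutput_semiJoinUpdate [Fintype ι] (I : Inst attr D) (R S : ι) :
    fullOutput attr (I.semiJoinUpdate R S) = fullOutput attr I := by
  ext t
  constructor
  · intro ht R' hR'
    exact semiJoinUpdate_rel_subset I R S R' (ht R' hR')
  · intro ht R' hR'
    rcases eq_or_ne R' R with rfl | h
    · rw [semiJoinUpdate_rel_self]
      exact ⟨ht R' hR', restrict (attr_subset_attrsOf attr (Finset.mem_univ S)) t,
        ht S (Finset.mem_univ S), agreeOn_restrict _ _ t⟩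
    · rw [semiJoinUpdate_rel_other _ _ _ _ h]; exact ht R' hR'

theorem foldl_rel_subset (f : Inst attr D → ι → Inst attr D)
    (h : ∀ (J : Inst attr D) (v : ι) (w : ι), (f J v).rel w ⊆ J.rel w) :
    ∀ (L : List ι) (J : Inst attr D) (w : ι), (L.foldl f J).rel w ⊆ J.rel w
  | [], _, _ => fun _ ht => ht
  | v :: L, J, w => fun t ht => h J v w (foldl_rel_subset f h L (f J v) w ht)

theorem foldl_rel_eq (f : Inst attr D → ι → Inst attr D) (w : ι) :
    ∀ (L : List ι) (J : Inst attr D),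
      (∀ (J' : Inst attr D) (v : ι), v ∈ L → (f J' v).rel w = J'.rel w) →
      (L.foldl f J).rel w = J.rel w
  | [], _, _ => rfl
  | v :: L, J, h =>
      (foldl_rel_eq f w L (f J v) fun J' u hu => h J' u (List.mem_cons_of_mem _ hu)).trans
        (h J v List.mem_cons_self)

theorem foldl_fullOutput [Fintype ι] (f : Inst attr D → ι → Inst attr D) :
    ∀ (L : List ι) (J : Inst attr D),
      (∀ (J' : Inst attr D) (v : ι), v ∈ L → fullOutput attr (f J' v) = fullOutput attr J') →
      fullOutput attr (L.foldl f J) = fullOutput attr J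
  | [], _, _ => rfl
  | v :: L, J, h =>
      (foldl_fullOutput f L (f J v) fun J' u hu => h J' u (List.mem_cons_of_mem _ hu)).trans
        (h J v List.mem_cons_self)

theorem mem_left_of_sublist_pair {a b : ι} :
    ∀ (L1 L2 : List ι), [a, b].Sublist (L1 ++ b :: L2) → b ∉ L2 → a ≠ b → a ∈ L1 := by
  intro L1
  induction L1 with
  | nil =>
    intro L2 h hb hab
    cases h with
    | cons _ h' => exact absurd (h'.subset (by simp)) hb
    | cons_cons => exact absurd rfl hab
  | cons c L1 ih =>
    intro L2 h hb hab
    cases h with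
    | cons _ h' => exact List.mem_cons_of_mem _ (ih L2 h' hb hab)
    | cons_cons => exact List.mem_cons_self

theorem decomp_of_nodup {L : List ι} {R : ι} (hnd : L.Nodup) (hR : R ∈ L) :
    ∃ L1 L2, L = L1 ++ R :: L2 ∧ R ∉ L1 ∧ R ∉ L2 := by
  obtain ⟨L1, L2, rfl⟩ := List.append_of_mem hR
  rw [List.nodup_append] at hnd
  exact ⟨L1, L2, rfl, fun hmem => hnd.2.2 _ hmem _ List.mem_cons_self rfl,
    (List.nodup_cons.mp hnd.2.1).1⟩

theorem exists_exit {T : SimpleGraph ι} {S : Finset ι} :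
    ∀ {a b : ι}, T.Walk a b → a ∈ S → b ∉ S → ∃ x y, x ∈ S ∧ y ∉ S ∧ T.Adj x y := by
  intro a b p
  induction p with
  | nil => intro h1 h2; exact absurd h1 h2
  | @cons u c b h p ih =>
    intro h1 h2
    by_cases hc : c ∈ S
    · exact ih hc h2
    · exact ⟨u, c, h1, hc, h⟩

theorem inner_child_match (P S' : ι) (hne : S' ≠ P) :
    ∀ (cs : List ι) (K : Inst attr D), S' ∈ cs →
      ∀ t ∈ (cs.foldl (fun K S => K.semiJoinUpdate P S) K).rel P,
        ∃ s ∈ K.rel S', AgreeOn t s := by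
  intro cs
  induction cs with
  | nil => intro K h; simp at h
  | cons c cs ih =>
    intro K hmem t ht
    rw [List.foldl_cons] at ht
    rcases eq_or_ne S' c with rfl | hc
    · have ht' : t ∈ (K.semiJoinUpdate P S').rel P :=
        foldl_rel_subset _ (fun J v w => semiJoinUpdate_rel_subset J P v w) cs _ P ht
      rw [semiJoinUpdate_rel_self] at ht'
      obtain ⟨-, s, hs, hag⟩ := ht'
      exact ⟨s, hs, hag⟩
    · have hmem' : S' ∈ cs := by
        rcases List.mem_cons.mp hmem with h | h
        · exact absurd h hc
        · exact h
      obtain ⟨s, hs, hag⟩ := ih (K.semiJoinUpdate P c) hmem' t ht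
      rw [semiJoinUpdate_rel_other K P c S' hne] at hs
      exact ⟨s, hs, hag⟩

theorem attr_step {T : SimpleGraph ι} (hT : IsJoinTree attr T)
    {S : Finset ι} {x y w : ι} (hy : y ∉ S)
    (hadj : T.Adj x y) (pwx : T.Walk w x) (hpwx : ∀ z ∈ pwx.support, z ∈ S)
    {A : α} (hAw : A ∈ attr w) (hAy : A ∈ attr y) : A ∈ attr x := by
  classical
  have hyb : y ∉ pwx.bypass.support := fun h => hy (hpwx y (pwx.support_bypass_subset h))
  have hP : (pwx.bypass.concat hadj).IsPath := by
    rw [← SimpleGraph.Walk.isPath_reverse_iff, SimpleGraph.Walk.reverse_concat]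
    exact (pwx.bypass_isPath.reverse).cons (by
      rw [SimpleGraph.Walk.support_reverse]; simpa using hyb)
  have hxP : x ∈ (pwx.bypass.concat hadj).support := by
    rw [SimpleGraph.Walk.support_concat]
    exact List.mem_append_left _ (SimpleGraph.Walk.end_mem_support _)
  obtain ⟨q0⟩ := (hT.2 A ⟨w, hAw⟩).preconnected
    (⟨w, hAw⟩ : {R : ι | A ∈ attr R}) (⟨y, hAy⟩ : {R : ι | A ∈ attr R})
  let q : T.Walk w y := q0.map (SimpleGraph.Embedding.induce _).toHom
  have hq : ∀ z ∈ q.support, A ∈ attr z := by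
    intro z hz
    have hz' : z ∈ (q0.map (SimpleGraph.Embedding.induce {R : ι | A ∈ attr R}).toHom).support := hz
    rw [SimpleGraph.Walk.support_map, List.mem_map] at hz'
    obtain ⟨z', _, rfl⟩ := hz'
    exact z'.2
  have huniq := SimpleGraph.isAcyclic_iff_path_unique.mp hT.1.2.IsAcyclic
      (⟨pwx.bypass.concat hadj, hP⟩ : T.Path w y) ⟨q.bypass, q.bypass_isPath⟩
  have hxq : x ∈ q.bypass.support := by
    have h2 : (pwx.bypass.concat hadj).support = q.bypass.support :=
      congrArg (fun p : T.Path w y => p.val.support) huniq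
    exact h2 ▸ hxP
  exact hq x (q.support_bypass_subset hxq)

theorem extension_aux [Fintype ι] {T : SimpleGraph ι}
    (hT : IsJoinTree attr T) (J : Inst attr D)
    (hcons : ∀ u v : ι, T.Adj u v → ∀ t ∈ J.rel u, ∃ s ∈ J.rel v, AgreeOn t s)
    (R : ι) :
    ∀ (n : ℕ) (S : Finset ι), (Finset.univ \ S).card = n → R ∈ S →
      (∀ w ∈ S, ∃ p : T.Walk R w, ∀ x ∈ p.support, x ∈ S) →
      ∀ u : Tuple D (attrsOf attr Finset.univ),
        (∀ w ∈ S, restrict (attr_subset_attrsOf attr (Finset.mem_univ w)) u ∈ J.rel w) →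
        ∃ u' ∈ fullOutput attr J,
          restrict (attr_subset_attrsOf attr (Finset.mem_univ R)) u' =
            restrict (attr_subset_attrsOf attr (Finset.mem_univ R)) u := by
  intro n
  induction n using Nat.strong_induction_on with
  | _ n ih =>
    intro S hcard hR hwalk u hu
    by_cases hS : S = Finset.univ
    · subst hS
      exact ⟨u, fun w hw => hu w hw, rfl⟩
    · obtain ⟨v0, -, hv0⟩ := Finset.exists_of_ssubset (Finset.ssubset_univ_iff.mpr hS)
      obtain ⟨W⟩ := hT.1.2.isConnected.preconnected R v0
      obtain ⟨x, y, hx, hy, hadj⟩ := exists_exit W hR hv0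
      obtain ⟨px, hpx⟩ := hwalk x hx
      obtain ⟨s, hs, hagree⟩ := hcons x y hadj _ (hu x hx)
      set u' : Tuple D (attrsOf attr Finset.univ) :=
        fun a => if h : a.1 ∈ attr y then s ⟨a.1, h⟩ else u a with hu'def
      have hbeta : ∀ w ∈ S, restrict (attr_subset_attrsOf attr (Finset.mem_univ w)) u' =
          restrict (attr_subset_attrsOf attr (Finset.mem_univ w)) u := by
        intro w hw
        funext a
        show u' ⟨a.1, _⟩ = u ⟨a.1, _⟩
        rw [hu'def]
        dsimp only
        split
        case isTrue h =>
          obtain ⟨pw, hpw⟩ := hwalk w hw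
          have hsupp : ∀ z ∈ (pw.reverse.append px).support, z ∈ S := by
            intro z hz
            rw [SimpleGraph.Walk.support_append, List.mem_append] at hz
            rcases hz with hz | hz
            · rw [SimpleGraph.Walk.support_reverse, List.mem_reverse] at hz
              exact hpw z hz
            · exact hpx z (List.mem_of_mem_tail hz)
          have hAx : a.1 ∈ attr x := attr_step hT hy hadj (pw.reverse.append px) hsupp a.2 h
          exact (hagree a.1 hAx h).symm
        case isFalse h => rfl
      have halpha : restrict (attr_subset_attrsOf attr (Finset.mem_univ y)) u' = s := by
        funext a
        show u' ⟨a.1, _⟩ = s a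
        rw [hu'def]
        exact dif_pos a.2
      have hlt : (Finset.univ \ insert y S).card < n := by
        rw [← hcard]
        apply Finset.card_lt_card
        rw [Finset.ssubset_iff_of_subset
          (Finset.sdiff_subset_sdiff (le_refl _) (Finset.subset_insert _ _))]
        exact ⟨y, by simp [hy], by simp⟩
      obtain ⟨u'', hmem, heq⟩ := ih _ hlt (insert y S) rfl (Finset.mem_insert_of_mem hR)
        (by
          intro w hw
          rcases Finset.mem_insert.mp hw with rfl | hw'
          · exact ⟨px.concat hadj, by
              intro z hz
              rw [SimpleGraph.Walk.support_concat,
                List.mem_append, List.mem_singleton] at hz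
              rcases hz with hz | rfl
              · exact Finset.mem_insert_of_mem (hpx z hz)
              · exact Finset.mem_insert_self _ _⟩
          · obtain ⟨p, hp⟩ := hwalk w hw'
            exact ⟨p, fun z hz => Finset.mem_insert_of_mem (hp z hz)⟩)
        u'
        (by
          intro w hw
          rcases Finset.mem_insert.mp hw with rfl | hw'
          · rw [halpha]; exact hs
          · rw [hbeta w hw']; exact hu w hw')
      exact ⟨u'', hmem, heq.trans (hbeta R hR)⟩

theorem extension [Fintype ι] {T : SimpleGraph ι} (hattr : ∀ R : ι, (attr R).Nonempty)
    (hT : IsJoinTree attr T) (J : Inst attr D)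
    (hcons : ∀ u v : ι, T.Adj u v → ∀ t ∈ J.rel u, ∃ s ∈ J.rel v, AgreeOn t s)
    (R : ι) (t : Tuple D (attr R)) (ht : t ∈ J.rel R) :
    ∃ u ∈ fullOutput attr J, restrict (attr_subset_attrsOf attr (Finset.mem_univ R)) u = t := by
  classical
  obtain ⟨a0, ha0⟩ := hattr R
  set u0 : Tuple D (attrsOf attr Finset.univ) :=
    fun a => if h : a.1 ∈ attr R then t ⟨a.1, h⟩ else t ⟨a0, ha0⟩ with hu0
  have hrest : restrict (attr_subset_attrsOf attr (Finset.mem_univ R)) u0 = t := by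
    funext a
    show u0 ⟨a.1, _⟩ = t a
    rw [hu0]
    exact dif_pos a.2
  obtain ⟨u, hmem, heq⟩ := extension_aux hT J hcons R (Finset.univ \ {R}).card {R} rfl
    (Finset.mem_singleton_self R)
    (by
      intro w hw
      rw [Finset.mem_singleton] at hw
      subst hw
      exact ⟨SimpleGraph.Walk.nil, by simp⟩)
    u0
    (by
      intro w hw
      rw [Finset.mem_singleton] at hw
      subst hw
      rw [hrest]
      exact ht)
  exact ⟨u, hmem, heq.trans hrest⟩

end Aux

end JoinQuery
namespace JoinQuery

universe v

/- STATEMENT 15 -/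
theorem yannakakis_full_reduction {ι α : Type} [Fintype ι] [DecidableEq ι] [DecidableEq α]
    (attr : ι → Finset α) (hattr : ∀ R : ι, (attr R).Nonempty)
    (hconn : (joinGraph attr).Connected)
    (T : SimpleGraph ι) (hT : IsJoinTree attr T)
    (r : ι) (par : ι → ι) (hpar_root : par r = r)
    (hpar : ∀ R S : ι, T.Adj R S ↔ ((R ≠ r ∧ par R = S) ∨ (S ≠ r ∧ par S = R)))
    (childList : ι → List ι)
    (hchild_nodup : ∀ R : ι, (childList R).Nodup)
    (hchild : ∀ R S : ι, S ∈ childList R ↔ (S ≠ r ∧ par S = R))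
    (Lf : List ι) (hLf_nodup : Lf.Nodup) (hLf_all : ∀ R : ι, R ∈ Lf)
    (hLf_order : ∀ R : ι, R ≠ r → List.Sublist [R, par R] Lf)
    (Lb : List ι) (hLb_nodup : Lb.Nodup) (hLb_all : ∀ R : ι, R ∈ Lb)
    (hLb_order : ∀ R : ι, R ≠ r → List.Sublist [par R, R] Lb)
    {D : Type v} (I : Inst attr D) :
    (∀ R : ι,
      (backwardPass (forwardPass I Lf childList) Lb r par).rel R =
        restrict (attr_subset_attrsOf attr (Finset.mem_univ R)) '' fullOutput attr I) ∧
    fullOutput attr (backwardPass (forwardPass I Lf childList) Lb r par) =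
      fullOutput attr I ∧
    FullyReduced attr (backwardPass (forwardPass I Lf childList) Lb r par) := by
  classical
  set stepF : Inst attr D → ι → Inst attr D :=
    fun J R => (childList R).foldl (fun K S => K.semiJoinUpdate R S) J with hstepF
  set stepB : Inst attr D → ι → Inst attr D :=
    fun J R => if R = r then J else J.semiJoinUpdate R (par R) with hstepB
  set Jf : Inst attr D := forwardPass I Lf childList with hJf
  set Jst : Inst attr D := backwardPass Jf Lb r par with hJst
  have hJfdef : Jf = Lf.foldl stepF I := rfl
  have hJstdef : Jst = Lb.foldl stepB Jf := rfl
  -- basic step properties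
  have hFsub : ∀ (J : Inst attr D) (v w : ι), (stepF J v).rel w ⊆ J.rel w := by
    intro J v w
    exact foldl_rel_subset _ (fun K S w' => semiJoinUpdate_rel_subset K v S w') _ J w
  have hFother : ∀ (J : Inst attr D) (v w : ι), w ≠ v → (stepF J v).rel w = J.rel w := by
    intro J v w hwv
    exact foldl_rel_eq _ w _ J (fun J' c _ => semiJoinUpdate_rel_other J' v c w hwv)
  have hFout : ∀ (J : Inst attr D) (v : ι),
      fullOutput attr (stepF J v) = fullOutput attr J := by
    intro J v
    exact foldl_fullOutput _ _ J (fun J' c _ => fullOutput_semiJoinUpdate J' v c)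
  have hBsub : ∀ (J : Inst attr D) (v w : ι), (stepB J v).rel w ⊆ J.rel w := by
    intro J v w
    rw [hstepB]
    dsimp only
    split
    · exact fun _ h => h
    · exact semiJoinUpdate_rel_subset J v (par v) w
  have hBother : ∀ (J : Inst attr D) (v w : ι), w ≠ v → (stepB J v).rel w = J.rel w := by
    intro J v w hwv
    rw [hstepB]
    dsimp only
    split
    · rfl
    · exact semiJoinUpdate_rel_other J v (par v) w hwv
  have hBout : ∀ (J : Inst attr D) (v : ι),
      fullOutput attr (stepB J v) = fullOutput attr J := by
    intro J v
    rw [hstepB]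
    dsimp only
    split
    · rfl
    · exact fullOutput_semiJoinUpdate J v (par v)
  -- full output is preserved
  have hout : fullOutput attr Jst = fullOutput attr I := by
    rw [hJstdef, hJfdef]
    exact (foldl_fullOutput stepB Lb _ (fun J' v _ => hBout J' v)).trans
      (foldl_fullOutput stepF Lf I (fun J' v _ => hFout J' v))
  -- the backward formula
  have hBformula : ∀ R : ι, R ≠ r →
      Jst.rel R = {t ∈ Jf.rel R | ∃ s ∈ Jst.rel (par R), AgreeOn t s} := by
    intro R hR
    obtain ⟨B1, B2, hLbeq, hR1, hR2⟩ := decomp_of_nodup hLb_nodup (hLb_all R)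
    have hparR_ne : par R ≠ R := by
      have hadj : T.Adj R (par R) := (hpar R (par R)).mpr (Or.inl ⟨hR, rfl⟩)
      exact hadj.ne'
    have hparB1 : par R ∈ B1 := by
      have hsb := hLb_order R hR
      rw [hLbeq] at hsb
      exact mem_left_of_sublist_pair B1 B2 hsb hR2 hparR_ne
    have hnd := hLb_nodup
    rw [hLbeq, List.nodup_append] at hnd
    have hparnotB2 : par R ∉ B2 := fun hmem =>
      hnd.2.2 _ hparB1 _ (List.mem_cons_of_mem _ hmem) rfl
    have hparnotRB2 : par R ∉ (R :: B2) := by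
      intro hmem
      rcases List.mem_cons.mp hmem with h | h
      · exact hparR_ne h
      · exact hparnotB2 h
    set K : Inst attr D := B1.foldl stepB Jf with hK
    have hKst : ∀ w : ι, w ∉ (R :: B2) → Jst.rel w = K.rel w := by
      intro w hw
      rw [hJstdef, hLbeq, List.foldl_append]
      exact foldl_rel_eq stepB w (R :: B2) K
        (fun J' v hv => hBother J' v w (fun h => hw (h ▸ hv)))
    have hKR : K.rel R = Jf.rel R :=
      foldl_rel_eq stepB R B1 Jf (fun J' v hv => hBother J' v R (fun h => hR1 (h ▸ hv)))
    have hstepEq : Jst.rel R = (stepB K R).rel R := by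
      rw [hJstdef, hLbeq, List.foldl_append, List.foldl_cons]
      exact foldl_rel_eq stepB R B2 (stepB K R)
        (fun J' v hv => hBother J' v R (fun h => hR2 (h ▸ hv)))
    rw [hstepEq]
    have hsb2 : (stepB K R).rel R = semiJoin attr K R (par R) := by
      rw [hstepB]
      dsimp only
      rw [if_neg hR]
      exact semiJoinUpdate_rel_self K R (par R)
    rw [hsb2, ← hKR, hKst (par R) hparnotRB2]
    rfl
  -- the forward pass property
  have hFformula : ∀ P S' : ι, S' ∈ childList P →
      ∀ t ∈ Jf.rel P, ∃ s ∈ Jf.rel S', AgreeOn t s := by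
    intro P S' hS' t ht
    obtain ⟨hS'r, hS'par⟩ := (hchild P S').mp hS'
    have hS'neP : S' ≠ P := by
      have hadj : T.Adj S' P := (hpar S' P).mpr (Or.inl ⟨hS'r, hS'par⟩)
      exact hadj.ne
    obtain ⟨F1, F2, hLfeq, hP1, hP2⟩ := decomp_of_nodup hLf_nodup (hLf_all P)
    have hS'F1 : S' ∈ F1 := by
      have hsb := hLf_order S' hS'r
      rw [hS'par, hLfeq] at hsb
      exact mem_left_of_sublist_pair F1 F2 hsb hP2 hS'neP
    have hnd := hLf_nodup
    rw [hLfeq, List.nodup_append] at hnd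
    have hS'notPF2 : S' ∉ (P :: F2) := fun hmem => hnd.2.2 _ hS'F1 _ hmem rfl
    set K : Inst attr D := F1.foldl stepF I with hK
    have hJfP : Jf.rel P ⊆ (stepF K P).rel P := by
      rw [hJfdef, hLfeq, List.foldl_append, List.foldl_cons]
      exact foldl_rel_subset stepF hFsub F2 (stepF K P) P
    have hKS' : Jf.rel S' = K.rel S' := by
      rw [hJfdef, hLfeq, List.foldl_append]
      exact foldl_rel_eq stepF S' (P :: F2) K
        (fun J' v hv => hFother J' v S' (fun h => hS'notPF2 (h ▸ hv)))
    obtain ⟨s, hs, hag⟩ := inner_child_match P S' hS'neP (childList P) K hS' t (hJfP ht)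
    exact ⟨s, by rw [hKS']; exact hs, hag⟩
  -- pairwise consistency of the final instance along tree edges
  have hsub_bst : ∀ w : ι, Jst.rel w ⊆ Jf.rel w := by
    intro w
    rw [hJstdef]
    exact foldl_rel_subset stepB hBsub Lb Jf w
  have hcons : ∀ u v : ι, T.Adj u v → ∀ t ∈ Jst.rel u, ∃ s ∈ Jst.rel v, AgreeOn t s := by
    intro u v hadj t ht
    rcases (hpar u v).mp hadj with ⟨hur, hpu⟩ | ⟨hvr, hpv⟩
    · have hbf := hBformula u hur
      rw [hpu] at hbf
      rw [hbf] at ht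
      obtain ⟨-, s, hs, hag⟩ := ht
      exact ⟨s, hs, hag⟩
    · have hvchild : v ∈ childList u := (hchild u v).mpr ⟨hvr, hpv⟩
      obtain ⟨s, hs, hag⟩ := hFformula u v hvchild t (hsub_bst u ht)
      have hbf := hBformula v hvr
      rw [hpv] at hbf
      refine ⟨s, ?_, hag⟩
      rw [hbf]
      exact ⟨hs, t, ht, agreeOn_symm hag⟩
  -- main equality
  have hmain : ∀ R : ι, Jst.rel R =
      restrict (attr_subset_attrsOf attr (Finset.mem_univ R)) '' fullOutput attr I := by
    intro R
    ext t
    constructor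
    · intro ht
      obtain ⟨u, hmem, hrest⟩ := extension hattr hT Jst hcons R t ht
      exact ⟨u, hout ▸ hmem, hrest⟩
    · rintro ⟨u, hu, rfl⟩
      have hu' : u ∈ fullOutput attr Jst := hout.symm ▸ hu
      exact hu' R (Finset.mem_univ R)
  refine ⟨hmain, hout, ?_⟩
  intro R
  rw [hout]
  exact hmain R

end JoinQuery
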